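/- arXiv:2012.14189 — 2 statements merged into one kernel-verified Lean document; each statement's English description precedes it below -/
import Mathlib

section
/- Let a > 0, e < 1 and c be real, let 0 < v < 1 and s > 1-v. Then ∫_0^{1-v} u^{a-1} (s-u)^{c-1} (1-v-u)^{-e} du = B(a, 1-e) · s^{c-1} (1-v)^{a-e} · ₂F₁(a, 1-c; a-e+1; (1-v)/s). -/
open Real intervalIntegral

/-- The Pochhammer symbol `(a)_k = a(a+1)⋯(a+k-1) = Γ(a+k)/Γ(a)`. -/
noncomputable def poch (a : ℝ) (k : ℕ) : ℝ := ∏ i ∈ Finset.range k, (a + (i : ℝ))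

/-- The Beta function `B(x,y) = Γ(x)Γ(y)/Γ(x+y)`. -/
noncomputable def Beta2 (x y : ℝ) : ℝ := Real.Gamma x * Real.Gamma y / Real.Gamma (x + y)

/-- Extended Beta function `B(x,y,z) = Γ(x)Γ(y)Γ(z)/Γ(x+y+z)`. -/
noncomputable def Beta3 (x y z : ℝ) : ℝ :=
  Real.Gamma x * Real.Gamma y * Real.Gamma z / Real.Gamma (x + y + z)

/-- The Gauss hypergeometric series `₂F₁(a,b;c;z) = Σ_k (a)_k(b)_k/((c)_k k!) zᵏ`. -/
noncomputable def hyp2F1 (a b c z : ℝ) : ℝ :=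
  ∑' k : ℕ, poch a k * poch b k / (poch c k * (Nat.factorial k : ℝ)) * z ^ k

set_option maxHeartbeats 1000000

lemma poch_zero (a : ℝ) : poch a 0 = 1 := by simp [poch]
lemma poch_succ (a : ℝ) (k : ℕ) : poch a (k + 1) = poch a k * (a + k) := by
  simp [poch, Finset.prod_range_succ]
lemma poch_pos {a : ℝ} (ha : 0 < a) (k : ℕ) : 0 < poch a k := by
  induction k with
  | zero => simp [poch_zero]
  | succ n ih => rw [poch_succ]; positivity
lemma poch_le_poch {a b : ℝ} (ha : 0 < a) (hab : a ≤ b) (k : ℕ) : poch a k ≤ poch b k := by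
  induction k with
  | zero => simp [poch_zero]
  | succ n ih =>
      rw [poch_succ, poch_succ]
      have h1 : (0:ℝ) < a + n := by positivity
      exact mul_le_mul ih (by linarith) h1.le ((poch_pos (lt_of_lt_of_le ha hab) n).le)
lemma Gamma_poch {a : ℝ} (ha : 0 < a) (k : ℕ) :
    Real.Gamma (a + k) = Real.Gamma a * poch a k := by
  induction k with
  | zero => simp [poch_zero]
  | succ n ih =>
      have h1 : (0:ℝ) < a + n := by positivity
      have : a + (n + 1 : ℕ) = (a + n) + 1 := by push_cast; ring
      rw [this, Real.Gamma_add_one h1.ne', ih, poch_succ]; ring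
lemma abs_poch_succ (m : ℝ) (k : ℕ) : |poch m (k + 1)| = |poch m k| * |m + k| := by
  rw [poch_succ, abs_mul]
lemma ratio_ev (m : ℝ) {ρ : ℝ} (h0 : 0 ≤ ρ) (h1 : ρ < 1) :
    ∀ᶠ k : ℕ in Filter.atTop, ρ * ((k : ℝ) + |m|) ≤ (1 + ρ)/2 * (k : ℝ) := by
  set r : ℝ := (1 + ρ) / 2 with hr
  have hd : 0 < r - ρ := by rw [hr]; linarith
  filter_upwards [Filter.eventually_ge_atTop (Nat.ceil ((ρ * |m|) / (r - ρ)))] with k hk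
  have h2 : (ρ * |m|) / (r - ρ) ≤ (k : ℝ) := le_trans (Nat.le_ceil _) (by exact_mod_cast hk)
  have := (div_le_iff₀ hd).mp h2
  nlinarith [abs_nonneg m]
lemma summable_poch (m : ℝ) {ρ : ℝ} (h0 : 0 ≤ ρ) (h1 : ρ < 1) :
    Summable (fun k : ℕ => |poch m k| / (Nat.factorial k : ℝ) * ρ ^ k) := by
  set r : ℝ := (1 + ρ) / 2 with hr
  have hr1 : r < 1 := by rw [hr]; linarith
  apply summable_of_ratio_norm_eventually_le hr1
  filter_upwards [ratio_ev m h0 h1] with k hk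
  have hfac : (0:ℝ) < (Nat.factorial k : ℝ) := by positivity
  have hfac1 : ((Nat.factorial (k+1) : ℕ) : ℝ) = (Nat.factorial k : ℝ) * ((k:ℝ)+1) := by
    push_cast [Nat.factorial_succ]; ring
  have hnn : (0:ℝ) ≤ |poch m (k+1)| / (Nat.factorial (k+1) : ℝ) * ρ ^ (k+1) := by positivity
  have hnn2 : (0:ℝ) ≤ |poch m k| / (Nat.factorial k : ℝ) * ρ ^ k := by positivity
  rw [Real.norm_of_nonneg hnn, Real.norm_of_nonneg hnn2]
  rw [abs_poch_succ, hfac1, pow_succ]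
  have hmk : |m + (k:ℝ)| ≤ (k:ℝ) + |m| := by
    calc |m + (k:ℝ)| ≤ |m| + |(k:ℝ)| := abs_add_le _ _
    _ = (k:ℝ) + |m| := by rw [Nat.abs_cast]; ring
  have key : |poch m k| * (|m + (k:ℝ)| * ρ) ≤ |poch m k| * (r * ((k:ℝ)+1)) := by
    apply mul_le_mul_of_nonneg_left _ (abs_nonneg _)
    have h3 : ρ * ((k:ℝ) + |m|) ≤ r * (k:ℝ) := hk
    have h4 : |m + (k:ℝ)| * ρ ≤ ((k:ℝ) + |m|) * ρ := mul_le_mul_of_nonneg_right hmk h0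
    have hrpos : 0 ≤ r := by rw [hr]; linarith
    nlinarith
  calc |poch m k| * |m + (k:ℝ)| / ((Nat.factorial k : ℝ) * ((k:ℝ)+1)) * (ρ^k * ρ)
      = (|poch m k| * (|m + (k:ℝ)| * ρ)) * ρ^k / ((Nat.factorial k : ℝ) * ((k:ℝ)+1)) := by ring
    _ ≤ (|poch m k| * (r * ((k:ℝ)+1))) * ρ^k / ((Nat.factorial k : ℝ) * ((k:ℝ)+1)) := by
        apply div_le_div_of_nonneg_right (mul_le_mul_of_nonneg_right key (by positivity))
        positivity
    _ = r * (|poch m k| / (Nat.factorial k : ℝ) * ρ ^ k) := by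
        field_simp
lemma summable_poch_deriv (m : ℝ) {ρ : ℝ} (h0 : 0 ≤ ρ) (h1 : ρ < 1) :
    Summable (fun k : ℕ => |poch m k| / (Nat.factorial k : ℝ) * ((k : ℝ) * ρ ^ (k - 1))) := by
  set r : ℝ := (1 + ρ) / 2 with hr
  have hr1 : r < 1 := by rw [hr]; linarith
  apply summable_of_ratio_norm_eventually_le hr1
  filter_upwards [ratio_ev m h0 h1, Filter.eventually_ge_atTop 1] with k hk hk1
  have hfac : (0:ℝ) < (Nat.factorial k : ℝ) := by positivity
  have hfac1 : ((Nat.factorial (k+1) : ℕ) : ℝ) = (Nat.factorial k : ℝ) * ((k:ℝ)+1) := by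
    push_cast [Nat.factorial_succ]; ring
  have hnn : (0:ℝ) ≤ |poch m (k+1)| / (Nat.factorial (k+1) : ℝ) * (((k:ℝ)+1) * ρ ^ k) := by
    positivity
  have hnn2 : (0:ℝ) ≤ |poch m k| / (Nat.factorial k : ℝ) * ((k:ℝ) * ρ ^ (k-1)) := by positivity
  have e1 : (((k+1 : ℕ)):ℝ) = (k:ℝ) + 1 := by push_cast; ring
  have e2 : (k + 1) - 1 = k := by omega
  rw [Real.norm_of_nonneg (by rw [e1, e2]; exact hnn), Real.norm_of_nonneg hnn2, e1, e2,
    abs_poch_succ, hfac1]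
  -- write ρ^k = ρ^(k-1) * ρ
  obtain ⟨j, rfl⟩ : ∃ j, k = j + 1 := ⟨k - 1, by omega⟩
  have e3 : (j + 1) - 1 = j := by omega
  rw [e3] at hnn2 ⊢
  rw [pow_succ]
  have hmk : |m + ((j:ℝ)+1)| ≤ ((j:ℝ)+1) + |m| := by
    calc |m + ((j:ℝ)+1)| ≤ |m| + |((j:ℝ)+1)| := abs_add_le _ _
    _ = ((j:ℝ)+1) + |m| := by
        have h5 : |((j:ℝ)+1)| = (j:ℝ)+1 := abs_of_nonneg (by positivity)
        rw [h5]; ring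
  have hk' : ρ * (((j:ℝ)+1) + |m|) ≤ r * ((j:ℝ)+1) := by
    rw [hr]; push_cast at hk; linarith
  have key : |poch m (j+1)| * (|m + ((j+1:ℕ):ℝ)| * ρ) ≤ |poch m (j+1)| * (r * ((j:ℝ)+1)) := by
    apply mul_le_mul_of_nonneg_left _ (abs_nonneg _)
    push_cast
    nlinarith [abs_nonneg (m + ((j:ℝ)+1)), hk', hmk, h0, mul_le_mul_of_nonneg_right hmk h0]
  calc |poch m (j+1)| * |m + ((j+1:ℕ):ℝ)| / ((Nat.factorial (j+1) : ℝ) * (((j+1:ℕ):ℝ)+1)) *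
        ((((j+1:ℕ):ℝ)+1) * (ρ^j * ρ))
      = (|poch m (j+1)| * (|m + ((j+1:ℕ):ℝ)| * ρ)) * ρ^j / (Nat.factorial (j+1) : ℝ) := by
        have : (0:ℝ) < ((j+1:ℕ):ℝ)+1 := by positivity
        field_simp
    _ ≤ (|poch m (j+1)| * (r * ((j:ℝ)+1))) * ρ^j / (Nat.factorial (j+1) : ℝ) := by
        apply div_le_div_of_nonneg_right (mul_le_mul_of_nonneg_right key (by positivity)) (by positivity)
    _ = r * (|poch m (j+1)| / (Nat.factorial (j+1) : ℝ) * (((j+1:ℕ):ℝ) * ρ ^ j)) := by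
        push_cast
        field_simp
lemma hasSum_binomial (r : ℝ) {y : ℝ} (h0 : 0 ≤ y) (h1 : y < 1) :
    HasSum (fun k : ℕ => poch (-r) k / (Nat.factorial k : ℝ) * y ^ k) ((1 - y) ^ r) := by
  set c : ℕ → ℝ := fun k => poch (-r) k / (Nat.factorial k : ℝ) with hc
  have hc0 : c 0 = 1 := by simp [hc, poch_zero]
  have hcsucc : ∀ k, c (k+1) * ((k:ℝ)+1) = c k * ((k:ℝ) - r) := by
    intro k
    have hfac : ((Nat.factorial (k+1) : ℕ) : ℝ) = (Nat.factorial k : ℝ) * ((k:ℝ)+1) := by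
      push_cast [Nat.factorial_succ]; ring
    have hfk : ((Nat.factorial k : ℕ) : ℝ) ≠ 0 := by positivity
    have hfk1 : ((k:ℝ)+1) ≠ 0 := by positivity
    rw [hc]
    simp only
    rw [poch_succ, hfac]
    field_simp
    ring
  rcases eq_or_lt_of_le h0 with rfl | hy0
  · have : (fun k : ℕ => c k * (0:ℝ) ^ k) = fun k => if k = 0 then 1 else 0 := by
      funext k; cases k with
      | zero => simp [hc0]
      | succ n => simp
    rw [this]
    simpa using (hasSum_ite_eq 0 (1:ℝ))
  set ρ : ℝ := (1 + y) / 2 with hρ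
  have hyρ : y < ρ := by rw [hρ]; linarith
  have hρ0 : 0 < ρ := by rw [hρ]; linarith
  have hρ1 : ρ < 1 := by rw [hρ]; linarith
  set t : Set ℝ := Set.Ioo (-ρ) ρ with ht
  have h0t : (0:ℝ) ∈ t := by constructor <;> simp_all <;> linarith
  have hyt : y ∈ t := by constructor <;> [linarith; exact hyρ]
  set g : ℕ → ℝ → ℝ := fun k z => c k * z ^ k with hg
  set g' : ℕ → ℝ → ℝ := fun k z => c k * ((k:ℝ) * z ^ (k-1)) with hg'
  set u : ℕ → ℝ := fun k => |poch (-r) k| / (Nat.factorial k : ℝ) * ((k:ℝ) * ρ ^ (k-1)) with hu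
  have hcabs : ∀ k, |c k| = |poch (-r) k| / (Nat.factorial k : ℝ) := by
    intro k
    rw [hc]
    simp only
    rw [abs_div, Nat.abs_cast]
  have husum : Summable u := summable_poch_deriv (-r) hρ0.le hρ1
  have hgd : ∀ k z, HasDerivAt (g k) (g' k z) z := fun k z => (hasDerivAt_pow k z).const_mul (c k)
  have hbound : ∀ (k : ℕ) (z : ℝ), z ∈ t → ‖g' k z‖ ≤ u k := by
    intro k z hz
    have hzρ : |z| ≤ ρ := by
      rw [abs_le]; exact ⟨hz.1.le, hz.2.le⟩
    rw [hg', hu]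
    simp only
    rw [Real.norm_eq_abs, abs_mul, abs_mul, Nat.abs_cast, abs_pow, hcabs]
    have : |z| ^ (k-1) ≤ ρ ^ (k-1) := pow_le_pow_left₀ (abs_nonneg z) hzρ _
    have hnn : (0:ℝ) ≤ |poch (-r) k| / (Nat.factorial k : ℝ) := by positivity
    exact mul_le_mul_of_nonneg_left (mul_le_mul_of_nonneg_left this (Nat.cast_nonneg k)) hnn
  have hg00 : ∀ k ≠ 0, g k 0 = 0 := by
    intro k hk
    rw [hg]; simp [zero_pow hk]
  have hg0sum : Summable (fun k => g k 0) := by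
    apply summable_of_ne_finset_zero (s := {0})
    intro k hk
    exact hg00 k (by simpa using hk)
  have hsum : ∀ z ∈ t, Summable (fun k => g k z) := fun z hz =>
    summable_of_summable_hasDerivAt_of_isPreconnected husum isOpen_Ioo
      (convex_Ioo _ _).isPreconnected (fun k w _ => hgd k w) hbound h0t hg0sum hz
  set F : ℝ → ℝ := fun z => ∑' k, g k z with hF
  have hFd : ∀ z ∈ t, HasDerivAt F (∑' k, g' k z) z := fun z hz =>
    hasDerivAt_tsum_of_isPreconnected husum isOpen_Ioo
      (convex_Ioo _ _).isPreconnected (fun k w _ => hgd k w) hbound h0t hg0sum hz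
  have hsum' : ∀ z ∈ t, Summable (fun k => g' k z) := fun z hz =>
    Summable.of_norm_bounded husum (fun k => hbound k z hz)
  -- the ODE : (1 - z) * F' z = -r * F z
  have key : ∀ z ∈ t, (1 - z) * (∑' k : ℕ, g' k z) = -r * F z := by
    intro z hz
    have h1 : (∑' k : ℕ, g' k z) = g' 0 z + ∑' k : ℕ, g' (k+1) z :=
      Summable.tsum_eq_zero_add (hsum' z hz)
    have hg'0 : g' 0 z = 0 := by rw [hg']; simp
    have hptw : ∀ k : ℕ, g' (k+1) z = ((k:ℝ) * (c k * z^k)) - r * (c k * z^k) := by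
      intro k
      have e : g' (k+1) z = (c (k+1) * ((k:ℝ)+1)) * z ^ k := by
        rw [hg']; simp only; push_cast; ring_nf
      rw [e, hcsucc]
      ring
    have hzS : ∀ k : ℕ, z * g' k z = (k:ℝ) * (c k * z ^ k) := by
      intro k
      cases k with
      | zero => simp [hg']
      | succ n =>
          rw [hg']
          simp only
          have e : (n + 1) - 1 = n := rfl
          rw [e]
          push_cast
          ring
    have hsm1 : Summable (fun k : ℕ => (k:ℝ) * (c k * z ^ k)) := by
      have := (hsum' z hz).mul_left z
      simpa only [hzS] using this
    have hsm2 : Summable (fun k : ℕ => r * (c k * z ^ k)) := (hsum z hz).mul_left r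
    have h2 : (∑' k : ℕ, g' (k+1) z)
        = (∑' k : ℕ, (k:ℝ) * (c k * z^k)) - ∑' k : ℕ, r * (c k * z^k) := by
      rw [← Summable.tsum_sub hsm1 hsm2]
      exact tsum_congr hptw
    have h3 : (∑' k : ℕ, (k:ℝ) * (c k * z^k)) = z * ∑' k : ℕ, g' k z := by
      rw [← tsum_mul_left]
      exact tsum_congr (fun k => (hzS k).symm)
    have h4 : (∑' k : ℕ, r * (c k * z^k)) = r * F z := tsum_mul_left
    have hS : (∑' k : ℕ, g' k z)
        = z * (∑' k : ℕ, g' k z) - r * F z :=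
      calc (∑' k : ℕ, g' k z) = g' 0 z + ∑' k : ℕ, g' (k+1) z := h1
        _ = (∑' k : ℕ, (k:ℝ) * (c k * z^k)) - ∑' k : ℕ, r * (c k * z^k) := by
            rw [hg'0, zero_add, h2]
        _ = z * (∑' k : ℕ, g' k z) - r * F z := by rw [h3, h4]
    linear_combination hS
  set H : ℝ → ℝ := fun z => F z * (1 - z) ^ (-r) with hH
  have hHd : ∀ z ∈ t, HasDerivAt H 0 z := by
    intro z hz
    have h1z : (0:ℝ) < 1 - z := by
      simp only [ht, Set.mem_Ioo] at hz; linarith [hz.2]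
    have hbase : HasDerivAt (fun w : ℝ => 1 - w) (-1) z := by
      simpa using ((hasDerivAt_id z).const_sub 1)
    have hd1 := hbase.rpow_const (p := -r) (Or.inl h1z.ne')
    have hd : HasDerivAt H ((∑' k : ℕ, g' k z) * (1 - z) ^ (-r) +
        F z * (-1 * -r * (1-z) ^ (-r-1))) z := (hFd z hz).mul hd1
    have e : (1 - z) ^ (-r) = (1 - z) ^ (-r-1) * (1 - z) := by
      rw [← Real.rpow_add_one h1z.ne']
      ring_nf
    have hzero : (∑' k : ℕ, g' k z) * (1 - z) ^ (-r) + F z * (-1 * -r * (1-z) ^ (-r-1)) = 0 := by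
      have k1 := key z hz
      linear_combination (∑' k : ℕ, g' k z) * e + (1 - z) ^ (-r-1) * k1
    rwa [hzero] at hd
  have hIcc : Set.Icc (0:ℝ) y ⊆ t := by
    intro z hz
    constructor
    · linarith [hz.1]
    · exact lt_of_le_of_lt hz.2 hyρ
  have hHy : H y = H 0 := by
    have hcont : ContinuousOn H (Set.Icc 0 y) := fun z hz =>
      (hHd z (hIcc hz)).continuousAt.continuousWithinAt
    have hderiv : ∀ z ∈ Set.Ico (0:ℝ) y, HasDerivWithinAt H 0 (Set.Ici z) z := fun z hz =>
      (hHd z (hIcc ⟨hz.1, hz.2.le⟩)).hasDerivWithinAt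
    exact constant_of_has_deriv_right_zero hcont hderiv y (Set.right_mem_Icc.mpr h0)
  have hF0 : F 0 = 1 := by
    have : (∑' k : ℕ, g k 0) = g 0 0 := tsum_eq_single 0 (fun k hk => hg00 k hk)
    rw [hF]
    simp only
    rw [this, hg]
    simp [hc0]
  have hH0 : H 0 = 1 := by
    have : H 0 = F 0 * (1 - (0:ℝ)) ^ (-r) := rfl
    rw [this, hF0]
    simp
  have h1y : (0:ℝ) < 1 - y := by linarith
  have hne : (1 - y) ^ (-r) ≠ 0 := (Real.rpow_pos_of_pos h1y _).ne'
  have hFy : F y = (1 - y) ^ r := by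
    have h5 : F y * (1 - y) ^ (-r) = 1 := hHy.trans hH0
    have e2 : (1 - y) ^ (r:ℝ) * (1 - y) ^ (-r) = 1 := by
      rw [← Real.rpow_add h1y]; simp
    have := h5.trans e2.symm
    exact mul_right_cancel₀ hne this
  have hfin := (hsum y hyt).hasSum
  have : (∑' k : ℕ, g k y) = (1 - y) ^ r := hFy
  rw [this] at hfin
  exact hfin
lemma realBeta_intervalIntegrable {p q : ℝ} (hp : 0 < p) (hq : 0 < q) :
    IntervalIntegrable (fun t : ℝ => t ^ (p - 1) * (1 - t) ^ (q - 1))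
      MeasureTheory.volume 0 1 := by
  have hC : IntervalIntegrable (fun x : ℝ =>
      (x : ℂ) ^ ((p:ℂ) - 1) * (1 - (x : ℂ)) ^ ((q:ℂ) - 1)) MeasureTheory.volume 0 1 :=
    Complex.betaIntegral_convergent (by simpa using hp) (by simpa using hq)
  have hre : IntervalIntegrable (fun x : ℝ =>
      ((x : ℂ) ^ ((p:ℂ) - 1) * (1 - (x : ℂ)) ^ ((q:ℂ) - 1)).re) MeasureTheory.volume 0 1 :=
    ⟨hC.1.re, hC.2.re⟩
  apply hre.congr_ae
  rw [Filter.EventuallyEq, MeasureTheory.ae_restrict_iff' measurableSet_uIoc]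
  filter_upwards with x hx
  rw [Set.uIoc_of_le (by norm_num : (0:ℝ) ≤ 1)] at hx
  have hx0 : (0:ℝ) ≤ x := hx.1.le
  have hx1 : (0:ℝ) ≤ 1 - x := by linarith [hx.2]
  rw [show ((p:ℂ) - 1) = ((p - 1 : ℝ) : ℂ) by push_cast; ring,
    show ((q:ℂ) - 1) = ((q - 1 : ℝ) : ℂ) by push_cast; ring,
    show (1 - (x:ℂ)) = ((1 - x : ℝ) : ℂ) by push_cast; ring]
  rw [← Complex.ofReal_cpow hx0, ← Complex.ofReal_cpow hx1, ← Complex.ofReal_mul,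
    Complex.ofReal_re]
lemma realBeta_eq {p q : ℝ} (hp : 0 < p) (hq : 0 < q) :
    ∫ t in (0:ℝ)..1, t ^ (p - 1) * (1 - t) ^ (q - 1) = Beta2 p q := by
  have key : Complex.Gamma p * Complex.Gamma q
      = Complex.Gamma ((p:ℂ) + q) * Complex.betaIntegral p q :=
    Complex.Gamma_mul_Gamma_eq_betaIntegral (by simpa using hp) (by simpa using hq)
  have hBI : Complex.betaIntegral p q
      = ((∫ t in (0:ℝ)..1, t ^ (p - 1) * (1 - t) ^ (q - 1) : ℝ) : ℂ) := by
    rw [Complex.betaIntegral, ← intervalIntegral.integral_ofReal]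
    apply intervalIntegral.integral_congr
    intro x hx
    rw [Set.uIcc_of_le (by norm_num : (0:ℝ) ≤ 1)] at hx
    have hx0 : (0:ℝ) ≤ x := hx.1
    have hx1 : (0:ℝ) ≤ 1 - x := by linarith [hx.2]
    simp only
    rw [show ((p:ℂ) - 1) = ((p - 1 : ℝ) : ℂ) by push_cast; ring,
      show ((q:ℂ) - 1) = ((q - 1 : ℝ) : ℂ) by push_cast; ring,
      show (1 - (x:ℂ)) = ((1 - x : ℝ) : ℂ) by push_cast; ring]
    rw [← Complex.ofReal_cpow hx0, ← Complex.ofReal_cpow hx1, ← Complex.ofReal_mul]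
  have hG : ∀ r : ℝ, Complex.Gamma (r : ℂ) = (Real.Gamma r : ℂ) := fun r =>
    (Complex.Gamma_ofReal r)
  have hpq : (0:ℝ) < p + q := by linarith
  have hGpq : Real.Gamma (p + q) ≠ 0 := (Real.Gamma_pos_of_pos hpq).ne'
  rw [hBI] at key
  rw [show ((p:ℂ) + q) = ((p + q : ℝ) : ℂ) by push_cast; ring] at key
  rw [hG, hG, hG] at key
  have : ((Real.Gamma p * Real.Gamma q : ℝ) : ℂ)
      = ((Real.Gamma (p+q) * ∫ t in (0:ℝ)..1, t ^ (p - 1) * (1 - t) ^ (q - 1) : ℝ) : ℂ) := by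
    push_cast
    rw [key]
  have h2 : Real.Gamma p * Real.Gamma q
      = Real.Gamma (p+q) * ∫ t in (0:ℝ)..1, t ^ (p - 1) * (1 - t) ^ (q - 1) :=
    Complex.ofReal_injective this
  rw [Beta2]
  field_simp
  linarith [h2]
lemma Beta2_pos {p q : ℝ} (hp : 0 < p) (hq : 0 < q) : 0 < Beta2 p q := by
  rw [Beta2]
  have h1 := Real.Gamma_pos_of_pos hp
  have h2 := Real.Gamma_pos_of_pos hq
  have h3 := Real.Gamma_pos_of_pos (by linarith : 0 < p + q)
  positivity
lemma Beta2_poch {a q : ℝ} (ha : 0 < a) (hq : 0 < q) (k : ℕ) :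
    Beta2 (a + k) q = Beta2 a q * poch a k / poch (a + q) k := by
  have h1 : Real.Gamma (a + k) = Real.Gamma a * poch a k := Gamma_poch ha k
  have h2 : Real.Gamma (a + k + q) = Real.Gamma (a + q) * poch (a + q) k := by
    have : a + k + q = (a + q) + k := by ring
    rw [this, Gamma_poch (by linarith) k]
  have h3 : Real.Gamma (a + q) ≠ 0 := (Real.Gamma_pos_of_pos (by linarith)).ne'
  have h4 : poch (a + q) k ≠ 0 := (poch_pos (by linarith) k).ne'
  rw [Beta2, Beta2, h1, h2]
  field_simp
lemma Beta2_mono {a q : ℝ} (ha : 0 < a) (hq : 0 < q) (k : ℕ) :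
    Beta2 (a + k) q ≤ Beta2 a q := by
  rw [Beta2_poch ha hq k]
  have h1 : poch a k ≤ poch (a + q) k := poch_le_poch ha (by linarith) k
  have h2 : 0 < poch (a + q) k := poch_pos (by linarith) k
  have h3 : 0 < Beta2 a q := Beta2_pos ha hq
  rw [mul_div_assoc]
  nth_rewrite 2 [← mul_one (Beta2 a q)]
  apply mul_le_mul_of_nonneg_left _ h3.le
  rw [div_le_one h2]
  exact h1
lemma core_integral {a c e x₀ : ℝ} (ha : 0 < a) (he : e < 1) (hx0 : 0 ≤ x₀) (hx1 : x₀ < 1) :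
    ∫ t in (0:ℝ)..1, t ^ (a-1) * (1 - x₀*t) ^ (c-1) * (1-t) ^ (-e)
      = ∑' k : ℕ, poch (1-c) k / (Nat.factorial k : ℝ) * x₀^k * Beta2 (a + k) (1-e) := by
  have hq : (0:ℝ) < 1 - e := by linarith
  set b : ℕ → ℝ := fun k => poch (1-c) k / (Nat.factorial k : ℝ) with hb
  set f : ℕ → ℝ → ℝ :=
    fun k t => b k * ((x₀*t)^k * (t ^ (a-1) * (1-t) ^ (-e))) with hf
  -- pointwise binomial expansion
  have hptw : ∀ t ∈ Set.Ioc (0:ℝ) 1,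
      HasSum (fun k => f k t) (t ^ (a-1) * (1 - x₀*t) ^ (c-1) * (1-t) ^ (-e)) := by
    intro t ht
    have h0' : 0 ≤ x₀ * t := mul_nonneg hx0 ht.1.le
    have h1' : x₀ * t < 1 := lt_of_le_of_lt (mul_le_of_le_one_right hx0 ht.2) hx1
    have hbin := hasSum_binomial (c-1) h0' h1'
    rw [show -(c-1) = 1-c by ring] at hbin
    have := hbin.mul_right (t ^ (a-1) * (1-t) ^ (-e))
    have e2 : (1 - x₀*t) ^ (c-1) * (t ^ (a-1) * (1-t) ^ (-e))
        = t ^ (a-1) * (1 - x₀*t) ^ (c-1) * (1-t) ^ (-e) := by ring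
    rw [e2] at this
    have hfun : (fun k => f k t)
        = fun i => poch (1 - c) i / (Nat.factorial i : ℝ) * (x₀ * t) ^ i * (t ^ (a - 1) * (1 - t) ^ (-e)) := by
      funext k
      rw [hf, hb]
      ring
    rw [hfun]
    exact this
  -- each term is integrable, with explicit integral
  have hfk : ∀ k : ℕ, Set.EqOn (f k)
      (fun t => (b k * x₀^k) * (t ^ ((a + k) - 1) * (1-t) ^ ((1-e) - 1))) (Set.Ioc 0 1) := by
    intro k t ht
    have ht0 : (0:ℝ) < t := ht.1
    have h1 : (x₀*t)^k = x₀^k * t^(k:ℕ) := mul_pow x₀ t k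
    have h2 : (t:ℝ)^(k:ℕ) = t ^ ((k:ℕ):ℝ) := (Real.rpow_natCast t k).symm
    have h3 : t ^ ((k:ℕ):ℝ) * t ^ (a-1) = t ^ ((a + k) - 1) := by
      rw [← Real.rpow_add ht0]
      congr 1
      ring
    have h4 : ((1:ℝ)-e) - 1 = -e := by ring
    rw [hf]
    simp only
    rw [h1, h2, h4, ← h3]
    ring
  have hint : ∀ k : ℕ, MeasureTheory.IntegrableOn
      (fun t : ℝ => t ^ ((a + k) - 1) * (1-t) ^ ((1-e) - 1)) (Set.Ioc 0 1)
      MeasureTheory.volume := by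
    intro k
    have hak : 0 < a + k := by positivity
    exact (realBeta_intervalIntegrable hak hq).1
  have hintf : ∀ k : ℕ, MeasureTheory.IntegrableOn (f k) (Set.Ioc 0 1) MeasureTheory.volume := by
    intro k
    have h5 : MeasureTheory.IntegrableOn
        (fun t : ℝ => (b k * x₀^k) * (t ^ ((a + k) - 1) * (1-t) ^ ((1-e) - 1)))
        (Set.Ioc 0 1) MeasureTheory.volume := (hint k).const_mul _
    exact h5.congr_fun (fun t ht => ((hfk k) ht).symm) measurableSet_Ioc
  -- value of each term integral
  have hval : ∀ k : ℕ, ∫ t in Set.Ioc (0:ℝ) 1, f k t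
      = b k * x₀^k * Beta2 (a + k) (1-e) := by
    intro k
    have hak : 0 < a + k := by positivity
    rw [MeasureTheory.setIntegral_congr_fun measurableSet_Ioc (hfk k),
      MeasureTheory.integral_const_mul, ← intervalIntegral.integral_of_le (by norm_num : (0:ℝ) ≤ 1),
      realBeta_eq hak hq]
  -- nonnegativity of the integrand pieces
  have habsf : ∀ k : ℕ, ∀ t ∈ Set.Ioc (0:ℝ) 1, ‖f k t‖ = |b k| * ((x₀*t)^k * (t ^ (a-1) * (1-t) ^ (-e))) := by
    intro k t ht
    have h0' : 0 ≤ x₀ * t := mul_nonneg hx0 ht.1.le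
    have hnn : (0:ℝ) ≤ (x₀*t)^k * (t ^ (a-1) * (1-t) ^ (-e)) := by
      have := Real.rpow_nonneg ht.1.le (a-1)
      have := Real.rpow_nonneg (by linarith [ht.2] : (0:ℝ) ≤ 1 - t) (-e)
      positivity
    rw [hf]
    simp only
    rw [Real.norm_eq_abs, abs_mul, abs_of_nonneg hnn]
  have hnormval : ∀ k : ℕ, ∫ t in Set.Ioc (0:ℝ) 1, ‖f k t‖
      = |b k| * x₀^k * Beta2 (a + k) (1-e) := by
    intro k
    have hak : 0 < a + k := by positivity
    have heq : Set.EqOn (fun t => ‖f k t‖)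
        (fun t => (|b k| * x₀^k) * (t ^ ((a + k) - 1) * (1-t) ^ ((1-e) - 1))) (Set.Ioc 0 1) := by
      intro t ht
      have h := (hfk k) ht
      have ht0 : (0:ℝ) < t := ht.1
      have hnn2 : (0:ℝ) ≤ t ^ ((a + k) - 1) * (1-t) ^ ((1-e) - 1) := by
        have := Real.rpow_nonneg ht0.le ((a + k) - 1)
        have := Real.rpow_nonneg (by linarith [ht.2] : (0:ℝ) ≤ 1 - t) ((1-e) - 1)
        positivity
      simp only
      rw [h, Real.norm_eq_abs, abs_mul, abs_of_nonneg hnn2, abs_mul,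
        abs_of_nonneg (pow_nonneg hx0 k)]
    rw [MeasureTheory.setIntegral_congr_fun measurableSet_Ioc heq,
      MeasureTheory.integral_const_mul, ← intervalIntegral.integral_of_le (by norm_num : (0:ℝ) ≤ 1),
      realBeta_eq hak hq]
  -- summability of the norm-integrals
  have hBpos := Beta2_pos ha hq
  have hsummaj : Summable (fun k : ℕ => |b k| * x₀^k * Beta2 a (1-e)) := by
    have h1 := (summable_poch (1-c) hx0 hx1).mul_right (Beta2 a (1-e))
    apply h1.congr
    intro k
    rw [hb]
    simp only
    rw [abs_div, Nat.abs_cast]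
  -- interchange
  have hswap := MeasureTheory.integral_tsum
    (f := f) (μ := MeasureTheory.volume.restrict (Set.Ioc (0:ℝ) 1))
    (fun k => (hintf k).aestronglyMeasurable)
    (by
      have hb1 : ∀ k : ℕ, (∫⁻ t in Set.Ioc (0:ℝ) 1, ‖f k t‖ₑ)
          ≤ ENNReal.ofReal (|b k| * x₀^k * Beta2 a (1-e)) := by
        intro k
        rw [← MeasureTheory.ofReal_integral_norm_eq_lintegral_enorm (hintf k), hnormval k]
        apply ENNReal.ofReal_le_ofReal
        have hak : 0 < a + k := by positivity
        have := Beta2_mono ha hq k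
        have hnn : 0 ≤ |b k| * x₀^k := by positivity
        exact mul_le_mul_of_nonneg_left this hnn
      apply ne_of_lt
      calc (∑' k, ∫⁻ t in Set.Ioc (0:ℝ) 1, ‖f k t‖ₑ)
          ≤ ∑' k, ENNReal.ofReal (|b k| * x₀^k * Beta2 a (1-e)) := ENNReal.tsum_le_tsum hb1
        _ = ENNReal.ofReal (∑' k, |b k| * x₀^k * Beta2 a (1-e)) := by
            rw [ENNReal.ofReal_tsum_of_nonneg (fun k => by positivity) hsummaj]
        _ < ⊤ := ENNReal.ofReal_lt_top)
  rw [intervalIntegral.integral_of_le (by norm_num : (0:ℝ) ≤ 1)]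
  calc ∫ t in Set.Ioc (0:ℝ) 1, t ^ (a-1) * (1 - x₀*t) ^ (c-1) * (1-t) ^ (-e)
      = ∫ t in Set.Ioc (0:ℝ) 1, (∑' k, f k t) :=
        MeasureTheory.setIntegral_congr_fun measurableSet_Ioc
          (fun t ht => ((hptw t ht).tsum_eq).symm)
    _ = ∑' k, ∫ t in Set.Ioc (0:ℝ) 1, f k t := hswap
    _ = ∑' k : ℕ, poch (1-c) k / (Nat.factorial k : ℝ) * x₀^k * Beta2 (a + k) (1-e) := by
        apply tsum_congr
        intro k
        rw [hval k, hb]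

/-- Euler-type evaluation of the inner integral over `[0,1-v]`:
`∫₀^{1-v} u^{a-1}(s-u)^{c-1}(1-v-u)^{-e} du = B(a,1-e) s^{c-1}(1-v)^{a-e}
₂F₁(a,1-c;a-e+1;(1-v)/s)`. -/
theorem stmt14 (a c e : ℝ) (ha : 0 < a) (he : e < 1)
    (v s : ℝ) (hv0 : 0 < v) (hv1 : v < 1) (hs : 1 - v < s) :
    (∫ u in (0:ℝ)..(1 - v), u ^ (a - 1) * (s - u) ^ (c - 1) * (1 - v - u) ^ (-e))
      = Beta2 a (1 - e) * s ^ (c - 1) * (1 - v) ^ (a - e) *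
          hyp2F1 a (1 - c) (a - e + 1) ((1 - v) / s) := by
  set w : ℝ := 1 - v with hwdef
  have hw : 0 < w := by rw [hwdef]; linarith
  have hs0 : 0 < s := lt_trans hw hs
  set x₀ : ℝ := w / s with hxdef
  have hx0 : 0 ≤ x₀ := by positivity
  have hx1 : x₀ < 1 := (div_lt_one hs0).mpr hs
  have hq : (0:ℝ) < 1 - e := by linarith
  have hgoalint : ∀ u : ℝ, 1 - v - u = w - u := fun u => by rw [hwdef]
  -- substitution u = w t
  have hsub := intervalIntegral.smul_integral_comp_mul_left (a := (0:ℝ)) (b := 1)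
    (fun u => u ^ (a - 1) * (s - u) ^ (c - 1) * (w - u) ^ (-e)) w
  simp only [mul_zero, mul_one] at hsub
  have hLHS : (∫ u in (0:ℝ)..w, u ^ (a - 1) * (s - u) ^ (c - 1) * (w - u) ^ (-e))
      = w * ∫ t in (0:ℝ)..1, (w*t) ^ (a-1) * (s - w*t) ^ (c-1) * (w - w*t) ^ (-e) := by
    rw [← hsub]; simp [smul_eq_mul]
  -- rewrite integrand
  have hcong : (∫ t in (0:ℝ)..1, (w*t) ^ (a-1) * (s - w*t) ^ (c-1) * (w - w*t) ^ (-e))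
      = ∫ t in (0:ℝ)..1,
          (w ^ (a-1) * s ^ (c-1) * w ^ (-e)) * (t ^ (a-1) * (1 - x₀*t) ^ (c-1) * (1-t) ^ (-e)) := by
    apply intervalIntegral.integral_congr
    intro t ht
    rw [Set.uIcc_of_le (by norm_num : (0:ℝ) ≤ 1)] at ht
    simp only
    have ht0 : 0 ≤ t := ht.1
    have ht1 : t ≤ 1 := ht.2
    have h1 : (w*t) ^ (a-1) = w ^ (a-1) * t ^ (a-1) := Real.mul_rpow hw.le ht0
    have h1x : 0 ≤ 1 - x₀*t := by
      have : x₀ * t ≤ x₀ := mul_le_of_le_one_right hx0 ht1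
      linarith
    have h2 : s - w*t = s * (1 - x₀*t) := by
      rw [hxdef]
      field_simp
    have h3 : (s * (1 - x₀*t)) ^ (c-1) = s ^ (c-1) * (1 - x₀*t) ^ (c-1) :=
      Real.mul_rpow hs0.le h1x
    have h4 : w - w*t = w * (1-t) := by ring
    have h5 : (w * (1-t)) ^ (-e) = w ^ (-e) * (1-t) ^ (-e) :=
      Real.mul_rpow hw.le (by linarith)
    rw [h1, h2, h3, h4, h5]
    ring
  -- core evaluation
  have hcore := core_integral (c := c) ha he hx0 hx1
  -- Beta2 recurrence per term
  have hterm : ∀ k : ℕ, poch (1-c) k / (Nat.factorial k : ℝ) * x₀^k * Beta2 (a + k) (1-e)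
      = Beta2 a (1-e) *
        (poch a k * poch (1-c) k / (poch (a - e + 1) k * (Nat.factorial k : ℝ)) * x₀ ^ k) := by
    intro k
    have h1 : Beta2 (a + k) (1-e) = Beta2 a (1-e) * poch a k / poch (a + (1-e)) k :=
      Beta2_poch ha hq k
    rw [show a + (1 - e) = a - e + 1 by ring] at h1
    rw [h1]
    have h2 : poch (a - e + 1) k ≠ 0 := (poch_pos (by linarith) k).ne'
    have h3 : ((Nat.factorial k : ℕ) : ℝ) ≠ 0 := by positivity
    field_simp
  have hsum : (∑' k : ℕ, poch (1-c) k / (Nat.factorial k : ℝ) * x₀^k * Beta2 (a + k) (1-e))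
      = Beta2 a (1-e) * hyp2F1 a (1-c) (a - e + 1) x₀ := by
    rw [hyp2F1, ← tsum_mul_left]
    exact tsum_congr hterm
  -- assemble
  have hpow : w * (w ^ (a-1) * s ^ (c-1) * w ^ (-e)) = s ^ (c-1) * w ^ (a-e) := by
    have e1 : w ^ (a-1) * w ^ (-e) = w ^ ((a-1) + -e) := (Real.rpow_add hw _ _).symm
    have e2 : w * w ^ ((a-1) + -e) = w ^ (((a-1) + -e) + 1) := by
      rw [Real.rpow_add_one hw.ne']
      ring
    calc w * (w ^ (a-1) * s ^ (c-1) * w ^ (-e))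
        = s ^ (c-1) * (w * (w ^ (a-1) * w ^ (-e))) := by ring
      _ = s ^ (c-1) * w ^ (a-e) := by
          rw [e1, e2, show ((a-1) + -e) + 1 = a - e by ring]
  rw [hLHS, hcong, intervalIntegral.integral_const_mul, hcore, hsum]
  calc w * (w ^ (a-1) * s ^ (c-1) * w ^ (-e) * (Beta2 a (1-e) * hyp2F1 a (1-c) (a - e + 1) x₀))
      = (w * (w ^ (a-1) * s ^ (c-1) * w ^ (-e))) * (Beta2 a (1-e) * hyp2F1 a (1-c) (a - e + 1) x₀) := by
        ring
    _ = Beta2 a (1-e) * s ^ (c-1) * w ^ (a-e) * hyp2F1 a (1-c) (a - e + 1) x₀ := by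
        rw [hpow]; ring
end

section
/- Let a,b,c,d > 0 and e < 1 be real, and let 0 < s < 1 and 1-s < t < 1. Writing the parameters explicitly, I₅(a,b,c,d,e; s,t) + I₆(a,b,c,d,e; s,t) = I₅(b,a,d,c,e; t,s) + I₆(b,a,d,c,e; t,s); i.e. the sum I₅ + I₆ is invariant under simultaneously interchanging a ↔ b, c ↔ d and s ↔ t. -/
open Real intervalIntegral

/-- Olsson's function
`F_P(a,b₁,b₂,c₁,c₂;x,y) = y^{-a} Σ_{i,j} (a)_{i+j}(a-c₂+1)_i(b₂)_j(b₁)_i /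
((a+b₂-c₂+1)_{i+j}(c₁)_i i! j!) xⁱ (1-y)ʲ`. -/
noncomputable def FP (a b₁ b₂ c₁ c₂ x y : ℝ) : ℝ :=
  y ^ (-a) *
    ∑' (i : ℕ) (j : ℕ),
      poch a (i + j) * poch (a - c₂ + 1) i * poch b₂ j * poch b₁ i /
        (poch (a + b₂ - c₂ + 1) (i + j) * poch c₁ i *
          (Nat.factorial i : ℝ) * (Nat.factorial j : ℝ)) * x ^ i * (1 - y) ^ j

/-- The extended `F₃` function
`F̃₃(a₁,a₂;b₁,b₂;c;d₁;d₂;x,y) = Σ_{i,j} (a₁)_i(a₂)_j(b₁)_i(b₂)_j(d₁)_i /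
((c)_{i+j}(d₂)_i i! j!) xⁱ yʲ`. -/
noncomputable def F3t (a₁ a₂ b₁ b₂ c d₁ d₂ x y : ℝ) : ℝ :=
  ∑' (i : ℕ) (j : ℕ),
    poch a₁ i * poch a₂ j * poch b₁ i * poch b₂ j * poch d₁ i /
      (poch c (i + j) * poch d₂ i * (Nat.factorial i : ℝ) * (Nat.factorial j : ℝ)) *
      x ^ i * y ^ j

/-- `I₅(s,t) = ∫₀^{1-s} (∫₀ˢ u^{a-1}(s-u)^{c-1}(1-u-v)^{-e} du)
v^{b-1}(t-v)^{d-1} dv`. -/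
noncomputable def I5 (a b c d e s t : ℝ) : ℝ :=
  ∫ v in (0:ℝ)..(1 - s),
    (∫ u in (0:ℝ)..s, u ^ (a - 1) * (s - u) ^ (c - 1) * (1 - u - v) ^ (-e)) *
      v ^ (b - 1) * (t - v) ^ (d - 1)

/-- `I₆(s,t) = ∫_{1-s}^{t} (∫₀^{1-v} u^{a-1}(s-u)^{c-1}(1-u-v)^{-e} du)
v^{b-1}(t-v)^{d-1} dv`. -/
noncomputable def I6 (a b c d e s t : ℝ) : ℝ :=
  ∫ v in (1 - s)..t,
    (∫ u in (0:ℝ)..(1 - v), u ^ (a - 1) * (s - u) ^ (c - 1) * (1 - u - v) ^ (-e)) *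
      v ^ (b - 1) * (t - v) ^ (d - 1)



open MeasureTheory Set ENNReal


lemma rpow_le_max {x p lo hi : ℝ} (hlo : 0 < lo) (h1 : lo ≤ x) (h2 : x ≤ hi) :
    x ^ p ≤ lo ^ p + hi ^ p := by
  rcases le_or_gt 0 p with hp | hp
  · calc x ^ p ≤ hi ^ p := Real.rpow_le_rpow (hlo.le.trans h1) h2 hp
      _ ≤ _ := le_add_of_nonneg_left (Real.rpow_nonneg hlo.le p)
  · calc x ^ p ≤ lo ^ p := Real.rpow_le_rpow_of_nonpos hlo h1 hp.le
      _ ≤ _ := le_add_of_nonneg_right (Real.rpow_nonneg ((hlo.trans_le (h1.trans h2)).le) p)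

lemma intInt_rpow_left {p : ℝ} (hp : -1 < p) (α β : ℝ) :
    IntervalIntegrable (fun x => (x - α) ^ p) volume α β := by
  have := (intervalIntegral.intervalIntegrable_rpow' hp (a := 0) (b := β - α)).comp_sub_right α
  simpa using this

lemma intInt_rpow_right {p : ℝ} (hp : -1 < p) (α β : ℝ) :
    IntervalIntegrable (fun x => (β - x) ^ p) volume α β := by
  have := (intervalIntegral.intervalIntegrable_rpow' hp (a := 0) (b := β - α)).comp_sub_left β
  simpa using this.symm

lemma lint_fin_of_II {f : ℝ → ℝ} {α β : ℝ} (h : IntervalIntegrable f volume α β) :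
    ∫⁻ x in Ioo α β, ENNReal.ofReal (f x) < ∞ :=
  (h.1.mono_set Ioo_subset_Ioc_self).setLIntegral_lt_top

lemma lint_tail {e γ δ : ℝ} (he : e < 1) (hδ0 : 0 < δ) (hδ1 : δ ≤ 1) :
    ∫⁻ u in Ioo (γ - δ) γ, ENNReal.ofReal ((γ - u) ^ (-e)) ≤ ENNReal.ofReal (1 / (1 - e)) := by
  have he' : (-1:ℝ) < -e := by linarith
  have hint : IntervalIntegrable (fun u => (γ - u) ^ (-e)) volume (γ - δ) γ :=
    intInt_rpow_right he' _ _
  have hnn : 0 ≤ᵐ[volume.restrict (Ioo (γ - δ) γ)] fun u => (γ - u) ^ (-e) :=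
    (ae_restrict_iff' measurableSet_Ioo).2 (Filter.Eventually.of_forall fun u hu =>
      Real.rpow_nonneg (by linarith [hu.2]) _)
  have hkey : ENNReal.ofReal (∫ u in Ioo (γ - δ) γ, (γ - u) ^ (-e)) =
      ∫⁻ u in Ioo (γ - δ) γ, ENNReal.ofReal ((γ - u) ^ (-e)) :=
    ofReal_integral_eq_lintegral_ofReal (hint.1.mono_set Ioo_subset_Ioc_self) hnn
  rw [← hkey]
  apply ENNReal.ofReal_le_ofReal
  have h1 : ∫ u in Ioo (γ - δ) γ, (γ - u) ^ (-e) = ∫ u in (γ - δ)..γ, (γ - u) ^ (-e) := by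
    rw [intervalIntegral.integral_of_le (by linarith), MeasureTheory.integral_Ioc_eq_integral_Ioo]
  rw [h1, intervalIntegral.integral_comp_sub_left (fun x => x ^ (-e)) γ, sub_self]
  have h2 : γ - (γ - δ) = δ := by ring
  rw [h2, integral_rpow (Or.inl he')]
  rw [Real.zero_rpow (by linarith : -e + 1 ≠ 0)]
  have h3 : δ ^ (-e + 1) ≤ 1 := Real.rpow_le_one hδ0.le hδ1 (by linarith)
  have h4 : (0:ℝ) < -e + 1 := by linarith
  calc (δ ^ (-e + 1) - 0) / (-e + 1) ≤ 1 / (-e + 1) := by rw [sub_zero]; gcongr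
      _ = 1 / (1 - e) := by ring_nf


lemma beta_fin {p q r : ℝ} (hp : -1 < p) (hq : -1 < q) (hr : 0 < r) :
    ∫⁻ x in Ioo 0 r, ENNReal.ofReal (x ^ p * (r - x) ^ q) < ∞ := by
  have hsplit : Ioo (0:ℝ) r = Ioo 0 (r/2) ∪ Ico (r/2) r :=
    (Ioo_union_Ico_eq_Ioo (by linarith) (by linarith)).symm
  rw [hsplit, lintegral_union measurableSet_Ico (by refine Set.disjoint_left.2 fun x hx hx' => ?_; exact absurd hx.2 (not_lt.2 hx'.1))]
  have hC1 : ∀ x ∈ Ioo (0:ℝ) (r/2), ENNReal.ofReal (x ^ p * (r - x) ^ q) ≤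
      ENNReal.ofReal (((r/2) ^ q + r ^ q) * x ^ p) := by
    intro x hx
    apply ENNReal.ofReal_le_ofReal
    rw [mul_comm]
    apply mul_le_mul_of_nonneg_right _ (Real.rpow_nonneg hx.1.le p)
    exact rpow_le_max (by linarith) (by linarith [hx.2]) (by linarith [hx.1])
  have hC2 : ∀ x ∈ Ico (r/2) r, ENNReal.ofReal (x ^ p * (r - x) ^ q) ≤
      ENNReal.ofReal (((r/2) ^ p + r ^ p) * (r - x) ^ q) := by
    intro x hx
    apply ENNReal.ofReal_le_ofReal
    apply mul_le_mul_of_nonneg_right _ (Real.rpow_nonneg (by linarith [hx.2]) q)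
    exact rpow_le_max (by linarith) hx.1 hx.2.le
  have h1 : ∫⁻ x in Ioo (0:ℝ) (r/2), ENNReal.ofReal (x ^ p * (r - x) ^ q) < ∞ := by
    refine lt_of_le_of_lt (setLIntegral_mono (by fun_prop) hC1) ?_
    exact lint_fin_of_II (((intervalIntegrable_rpow' hp (a := 0) (b := r/2)).const_mul _))
  have h2 : ∫⁻ x in Ico (r/2) r, ENNReal.ofReal (x ^ p * (r - x) ^ q) < ∞ := by
    refine lt_of_le_of_lt (setLIntegral_mono (by fun_prop) hC2) ?_
    have hII : IntervalIntegrable (fun x => ((r/2) ^ p + r ^ p) * (r - x) ^ q)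
        volume 0 r := (intInt_rpow_right hq 0 r).const_mul _
    exact lt_of_le_of_lt (lintegral_mono_set (fun x hx => ⟨by linarith [hx.1], hx.2.le⟩ :
      Ico (r/2) r ⊆ Ioc 0 r)) hII.1.setLIntegral_lt_top
  exact ENNReal.add_lt_top.2 ⟨h1, h2⟩


noncomputable def Kf (a b c d e s t : ℝ) (p : ℝ × ℝ) : ℝ :=
  (p.1 ^ (a-1) * (s - p.1) ^ (c-1) * (1 - p.1 - p.2) ^ (-e)) * (p.2 ^ (b-1) * (t - p.2) ^ (d-1))

def Rg (s t : ℝ) : Set (ℝ × ℝ) := (Ioo 0 s ×ˢ Ioo 0 t) ∩ {p | p.1 + p.2 < 1}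

noncomputable def Lg (a b c d e s t : ℝ) : ℝ≥0∞ :=
  ∫⁻ p, (Rg s t).indicator (fun p => ENNReal.ofReal (Kf a b c d e s t p)) p
    ∂(volume.prod volume)

lemma meas_Kf (a b c d e s t : ℝ) : Measurable (Kf a b c d e s t) := by
  unfold Kf; fun_prop

lemma meas_Rg (s t : ℝ) : MeasurableSet (Rg s t) :=
  (measurableSet_Ioo.prod measurableSet_Ioo).inter
    (measurableSet_lt (measurable_fst.add measurable_snd) measurable_const)

lemma meas_FF (a b c d e s t : ℝ) :
    Measurable ((Rg s t).indicator (fun p => ENNReal.ofReal (Kf a b c d e s t p))) :=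
  ((meas_Kf a b c d e s t).ennreal_ofReal).indicator (meas_Rg s t)

lemma Lg_symm (a b c d e s t : ℝ) : Lg a b c d e s t = Lg b a d c e t s := by
  rw [Lg, Lg, ← MeasureTheory.lintegral_prod_swap]
  congr 1
  funext z
  have hmem : z.swap ∈ Rg s t ↔ z ∈ Rg t s := by
    simp only [Rg, Prod.fst_swap, Prod.snd_swap, mem_inter_iff, mem_prod, mem_setOf_eq]
    constructor
    · rintro ⟨⟨h1, h2⟩, h3⟩; exact ⟨⟨h2, h1⟩, by linarith⟩
    · rintro ⟨⟨h1, h2⟩, h3⟩; exact ⟨⟨h2, h1⟩, by linarith⟩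
  have hval : Kf a b c d e s t z.swap = Kf b a d c e t s z := by
    simp only [Kf, Prod.fst_swap, Prod.snd_swap]
    have : (1 - z.2 - z.1 : ℝ) = 1 - z.1 - z.2 := by ring
    rw [this]; ring
  by_cases hz : z ∈ Rg t s
  · rw [Set.indicator_of_mem (hmem.2 hz), Set.indicator_of_mem hz, hval]
  · rw [Set.indicator_of_notMem (fun h => hz (hmem.1 h)), Set.indicator_of_notMem hz]


noncomputable def Ag (a b c d e s t : ℝ) : ℝ≥0∞ :=
  ∫⁻ v in Ioo 0 (1-s), ∫⁻ u in Ioo 0 s, ENNReal.ofReal (Kf a b c d e s t (u, v))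

noncomputable def Bg (a b c d e s t : ℝ) : ℝ≥0∞ :=
  ∫⁻ v in Ioo (1-s) t, ∫⁻ u in Ioo 0 (1-v), ENNReal.ofReal (Kf a b c d e s t (u, v))

lemma Lg_eq_add (a b c d e s t : ℝ) (hs0 : 0 < s) (hs1 : s < 1) (ht0 : 1 - s < t)
    (ht1 : t < 1) : Lg a b c d e s t = Ag a b c d e s t + Bg a b c d e s t := by
  rw [Lg, MeasureTheory.lintegral_prod_symm' _ (meas_FF a b c d e s t)]
  have step1 : ∀ v : ℝ,
      (∫⁻ u, (Rg s t).indicator (fun p => ENNReal.ofReal (Kf a b c d e s t p)) (u, v)) =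
      (Ioo 0 t).indicator
        (fun v => ∫⁻ u in Ioo 0 (min s (1-v)), ENNReal.ofReal (Kf a b c d e s t (u, v))) v := by
    intro v
    by_cases hv : v ∈ Ioo (0:ℝ) t
    · rw [Set.indicator_of_mem hv, ← lintegral_indicator measurableSet_Ioo]
      congr 1
      funext u
      by_cases hu : u ∈ Ioo (0:ℝ) (min s (1-v))
      · rw [Set.indicator_of_mem hu]
        refine Set.indicator_of_mem ?_ _
        refine ⟨⟨⟨hu.1, (lt_min_iff.1 hu.2).1⟩, hv⟩, ?_⟩
        have h2 := (lt_min_iff.1 hu.2).2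
        simp only [mem_setOf_eq]
        linarith
      · rw [Set.indicator_of_notMem hu]
        refine Set.indicator_of_notMem ?_ _
        rintro ⟨⟨hu', hv'⟩, hsum⟩
        have hsum' : u + v < 1 := hsum
        exact hu ⟨hu'.1, lt_min hu'.2 (by linarith)⟩
    · rw [Set.indicator_of_notMem hv]
      have : ∀ u : ℝ, (Rg s t).indicator
          (fun p => ENNReal.ofReal (Kf a b c d e s t p)) (u, v) = 0 := by
        intro u
        exact Set.indicator_of_notMem (fun h => hv h.1.2) _
      simp [this]
  simp_rw [step1]
  rw [lintegral_indicator measurableSet_Ioo]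
  have hsplit : Ioo (0:ℝ) t = Ioc 0 (1-s) ∪ Ioo (1-s) t :=
    (Ioc_union_Ioo_eq_Ioo (by linarith) ht0).symm
  have hdisj : Disjoint (Ioc (0:ℝ) (1-s)) (Ioo (1-s) t) :=
    Set.disjoint_left.2 fun x hx hx' => absurd hx.2 (not_le.2 hx'.1)
  rw [hsplit, lintegral_union measurableSet_Ioo hdisj]
  congr 1
  · rw [← setLIntegral_congr (Ioo_ae_eq_Ioc (a := (0:ℝ)) (b := 1-s))]
    refine setLIntegral_congr_fun measurableSet_Ioo (fun v hv => ?_)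
    rw [min_eq_left (by linarith [hv.2])]
  · refine setLIntegral_congr_fun measurableSet_Ioo (fun v hv => ?_)
    rw [min_eq_right (by linarith [hv.1])]


lemma fin_piece {C e δ q r : ℝ} (he : e < 1) (hδ0 : 0 < δ) (hδ1 : δ ≤ 1) (hq : -1 < q) :
    ∫⁻ y, ((Ioo (0:ℝ) r).indicator (fun y => ENNReal.ofReal (C * (r - y) ^ q)) y) *
      (∫⁻ x, (Ioo (1 - y - δ) (1 - y)).indicator
        (fun x => ENNReal.ofReal ((1 - y - x) ^ (-e))) x) < ∞ := by
  have hstep : ∀ y : ℝ,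
      ((Ioo (0:ℝ) r).indicator (fun y => ENNReal.ofReal (C * (r - y) ^ q)) y) *
        (∫⁻ x, (Ioo (1 - y - δ) (1 - y)).indicator
          (fun x => ENNReal.ofReal ((1 - y - x) ^ (-e))) x) ≤
      ((Ioo (0:ℝ) r).indicator (fun y => ENNReal.ofReal (C * (r - y) ^ q)) y) *
        ENNReal.ofReal (1 / (1 - e)) := by
    intro y
    refine mul_le_mul_right ?_ _
    rw [lintegral_indicator measurableSet_Ioo]
    exact lint_tail he hδ0 hδ1 (γ := 1 - y)
  refine lt_of_le_of_lt (lintegral_mono hstep) ?_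
  rw [lintegral_mul_const' _ _ ENNReal.ofReal_ne_top, lintegral_indicator measurableSet_Ioo]
  exact ENNReal.mul_lt_top (lint_fin_of_II ((intInt_rpow_right hq 0 r).const_mul C))
    ENNReal.ofReal_lt_top


lemma Lg_fin (a b c d e s t : ℝ) (ha : 0 < a) (hb : 0 < b) (hc : 0 < c) (hd : 0 < d)
    (he : e < 1) (hs0 : 0 < s) (hs1 : s < 1) (ht0 : 1 - s < t) (ht1 : t < 1) :
    Lg a b c d e s t < ∞ := by
  set δ : ℝ := min (min (s + t - 1) (1 - t)) (1 - s) / 2 with hδdef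
  have hm1 : min (min (s + t - 1) (1 - t)) (1 - s) ≤ s + t - 1 :=
    (min_le_left _ _).trans (min_le_left _ _)
  have hm2 : min (min (s + t - 1) (1 - t)) (1 - s) ≤ 1 - t :=
    (min_le_left _ _).trans (min_le_right _ _)
  have hm3 : min (min (s + t - 1) (1 - t)) (1 - s) ≤ 1 - s := min_le_right _ _
  have hmpos : 0 < min (min (s + t - 1) (1 - t)) (1 - s) :=
    lt_min (lt_min (by linarith) (by linarith)) (by linarith)
  have hδ0 : 0 < δ := by rw [hδdef]; linarith
  have hδκ : 2 * δ ≤ s + t - 1 := by rw [hδdef]; linarith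
  have hδt : δ < 1 - t := by rw [hδdef]; linarith
  have hδs : δ < 1 - s := by rw [hδdef]; linarith
  have hδ1 : δ ≤ 1 := by linarith
  have hlo_u : (0:ℝ) < 1 - t - δ := by linarith
  have hlo_v : (0:ℝ) < 1 - s - δ := by linarith
  set Ca : ℝ := (1 - t - δ) ^ (a-1) + s ^ (a-1) with hCa_def
  set Cb : ℝ := (1 - s - δ) ^ (b-1) + t ^ (b-1) with hCb_def
  set Cc : ℝ := δ ^ (c-1) + s ^ (c-1) with hCc_def
  set Cd : ℝ := δ ^ (d-1) + t ^ (d-1) with hCd_def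
  set Ce : ℝ := δ ^ (-e) + 1 ^ (-e) with hCe_def
  have hCa0 : 0 ≤ Ca := add_nonneg (Real.rpow_nonneg hlo_u.le _) (Real.rpow_nonneg hs0.le _)
  have hCb0 : 0 ≤ Cb := add_nonneg (Real.rpow_nonneg hlo_v.le _) (Real.rpow_nonneg (by linarith) _)
  have hCc0 : 0 ≤ Cc := add_nonneg (Real.rpow_nonneg hδ0.le _) (Real.rpow_nonneg hs0.le _)
  have hCd0 : 0 ≤ Cd := add_nonneg (Real.rpow_nonneg hδ0.le _) (Real.rpow_nonneg (by linarith) _)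
  have hCe0 : 0 ≤ Ce := add_nonneg (Real.rpow_nonneg hδ0.le _) (Real.rpow_nonneg zero_le_one _)
  -- bounding functions
  set f1 : ℝ × ℝ → ℝ≥0∞ := fun p =>
    ((Ioo (0:ℝ) s).indicator (fun u => ENNReal.ofReal (Ce * (u ^ (a-1) * (s - u) ^ (c-1)))) p.1) *
    ((Ioo (0:ℝ) t).indicator (fun v => ENNReal.ofReal (v ^ (b-1) * (t - v) ^ (d-1))) p.2)
    with hf1_def
  set f2 : ℝ × ℝ → ℝ≥0∞ := fun p =>
    ((Ioo (0:ℝ) t).indicator (fun v => ENNReal.ofReal ((Ca * Cc * Cb) * (t - v) ^ (d-1))) p.2) *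
    ((Ioo (1 - p.2 - δ) (1 - p.2)).indicator
      (fun u => ENNReal.ofReal ((1 - p.2 - u) ^ (-e))) p.1) with hf2_def
  set f3 : ℝ × ℝ → ℝ≥0∞ := fun p =>
    ((Ioo (0:ℝ) s).indicator (fun u => ENNReal.ofReal ((Ca * Cd * Cb) * (s - u) ^ (c-1))) p.1) *
    ((Ioo (1 - p.1 - δ) (1 - p.1)).indicator
      (fun v => ENNReal.ofReal ((1 - p.1 - v) ^ (-e))) p.2) with hf3_def
  -- pointwise bound
  have hpt : ∀ p : ℝ × ℝ,
      (Rg s t).indicator (fun p => ENNReal.ofReal (Kf a b c d e s t p)) p ≤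
        f1 p + f2 p + f3 p := by
    rintro ⟨u, v⟩
    by_cases hp : (u, v) ∈ Rg s t
    · obtain ⟨⟨hu, hv⟩, hsum⟩ := hp
      simp only [mem_Ioo] at hu hv
      have hsum' : u + v < 1 := hsum
      have hu0 : (0:ℝ) < u := hu.1
      have hus : u < s := hu.2
      have hv0 : (0:ℝ) < v := hv.1
      have hvt : v < t := hv.2
      have hsu0 : (0:ℝ) < s - u := by linarith
      have htv0 : (0:ℝ) < t - v := by linarith
      have huv0 : (0:ℝ) < 1 - u - v := by linarith
      have hmem : (u, v) ∈ Rg s t := ⟨⟨mem_Ioo.2 hu, mem_Ioo.2 hv⟩, hsum⟩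
      rw [Set.indicator_of_mem hmem]
      have hKf : Kf a b c d e s t (u, v) =
          (u ^ (a-1) * (s - u) ^ (c-1) * (1 - u - v) ^ (-e)) *
            (v ^ (b-1) * (t - v) ^ (d-1)) := rfl
      by_cases h1uv : δ ≤ 1 - u - v
      · -- bounded away from the line u+v=1 : use f1
        have hbound : Kf a b c d e s t (u, v) ≤
            Ce * (u ^ (a-1) * (s - u) ^ (c-1)) * (v ^ (b-1) * (t - v) ^ (d-1)) := by
          rw [hKf]
          refine mul_le_mul_of_nonneg_right ?_
            (mul_nonneg (Real.rpow_nonneg hv0.le _) (Real.rpow_nonneg htv0.le _))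
          have hz : (1 - u - v) ^ (-e) ≤ Ce :=
            rpow_le_max hδ0 h1uv (by linarith)
          calc u ^ (a-1) * (s - u) ^ (c-1) * (1 - u - v) ^ (-e)
              ≤ u ^ (a-1) * (s - u) ^ (c-1) * Ce :=
                mul_le_mul_of_nonneg_left hz
                  (mul_nonneg (Real.rpow_nonneg hu0.le _) (Real.rpow_nonneg hsu0.le _))
            _ = Ce * (u ^ (a-1) * (s - u) ^ (c-1)) := by ring
        have hle1 : ENNReal.ofReal (Kf a b c d e s t (u, v)) ≤ f1 (u, v) := by
          simp only [hf1_def]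
          rw [Set.indicator_of_mem (mem_Ioo.2 hu), Set.indicator_of_mem (mem_Ioo.2 hv),
            ← ENNReal.ofReal_mul (by positivity)]
          exact ENNReal.ofReal_le_ofReal hbound
        exact le_add_right (le_add_right hle1)
      · push_neg at h1uv
        have huB : 1 - t - δ ≤ u := by linarith
        have hvB : 1 - s - δ ≤ v := by linarith
        have hCa' : u ^ (a-1) ≤ Ca := rpow_le_max hlo_u huB (by linarith)
        have hCb' : v ^ (b-1) ≤ Cb := rpow_le_max hlo_v hvB (by linarith)
        by_cases hsu : δ ≤ s - u
        · -- use f2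
          have hCc' : (s - u) ^ (c-1) ≤ Cc := rpow_le_max hδ0 hsu (by linarith)
          have hbound : Kf a b c d e s t (u, v) ≤
              (Ca * Cc * Cb) * (t - v) ^ (d-1) * (1 - v - u) ^ (-e) := by
            rw [hKf]
            have h1 : (1 - v - u : ℝ) = 1 - u - v := by ring
            rw [h1]
            calc (u ^ (a-1) * (s - u) ^ (c-1) * (1 - u - v) ^ (-e)) *
                  (v ^ (b-1) * (t - v) ^ (d-1))
                = (u ^ (a-1) * (s - u) ^ (c-1) * v ^ (b-1)) *
                  ((t - v) ^ (d-1) * (1 - u - v) ^ (-e)) := by ring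
              _ ≤ (Ca * Cc * Cb) * ((t - v) ^ (d-1) * (1 - u - v) ^ (-e)) := by
                  refine mul_le_mul_of_nonneg_right ?_
                    (mul_nonneg (Real.rpow_nonneg htv0.le _) (Real.rpow_nonneg huv0.le _))
                  refine mul_le_mul (mul_le_mul hCa' hCc' (Real.rpow_nonneg hsu0.le _) hCa0)
                    hCb' (Real.rpow_nonneg hv0.le _) (mul_nonneg hCa0 hCc0)
              _ = (Ca * Cc * Cb) * (t - v) ^ (d-1) * (1 - u - v) ^ (-e) := by ring
          have hle2 : ENNReal.ofReal (Kf a b c d e s t (u, v)) ≤ f2 (u, v) := by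
            have hmemu : u ∈ Ioo (1 - v - δ) (1 - v) := mem_Ioo.2 ⟨by linarith, by linarith⟩
            simp only [hf2_def]
            rw [Set.indicator_of_mem (mem_Ioo.2 hv), Set.indicator_of_mem hmemu,
              ← ENNReal.ofReal_mul (by positivity)]
            exact ENNReal.ofReal_le_ofReal hbound
          exact le_add_right (le_add_left hle2)
        · -- use f3
          push_neg at hsu
          have htvδ : δ ≤ t - v := by linarith
          have hCd' : (t - v) ^ (d-1) ≤ Cd := rpow_le_max hδ0 htvδ (by linarith)
          have hbound : Kf a b c d e s t (u, v) ≤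
              (Ca * Cd * Cb) * (s - u) ^ (c-1) * (1 - u - v) ^ (-e) := by
            rw [hKf]
            calc (u ^ (a-1) * (s - u) ^ (c-1) * (1 - u - v) ^ (-e)) *
                  (v ^ (b-1) * (t - v) ^ (d-1))
                = (u ^ (a-1) * (t - v) ^ (d-1) * v ^ (b-1)) *
                  ((s - u) ^ (c-1) * (1 - u - v) ^ (-e)) := by ring
              _ ≤ (Ca * Cd * Cb) * ((s - u) ^ (c-1) * (1 - u - v) ^ (-e)) := by
                  refine mul_le_mul_of_nonneg_right ?_
                    (mul_nonneg (Real.rpow_nonneg hsu0.le _) (Real.rpow_nonneg huv0.le _))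
                  refine mul_le_mul (mul_le_mul hCa' hCd' (Real.rpow_nonneg htv0.le _) hCa0)
                    hCb' (Real.rpow_nonneg hv0.le _) (mul_nonneg hCa0 hCd0)
              _ = (Ca * Cd * Cb) * (s - u) ^ (c-1) * (1 - u - v) ^ (-e) := by ring
          have hle3 : ENNReal.ofReal (Kf a b c d e s t (u, v)) ≤ f3 (u, v) := by
            have hmemv : v ∈ Ioo (1 - u - δ) (1 - u) := mem_Ioo.2 ⟨by linarith, by linarith⟩
            simp only [hf3_def]
            rw [Set.indicator_of_mem (mem_Ioo.2 hu), Set.indicator_of_mem hmemv,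
              ← ENNReal.ofReal_mul (by positivity)]
            exact ENNReal.ofReal_le_ofReal hbound
          exact le_add_left hle3
    · rw [Set.indicator_of_notMem hp]
      exact zero_le
  -- measurability of the pieces
  have m1 : Measurable f1 := by
    apply Measurable.mul
    · exact (Measurable.indicator (by fun_prop) measurableSet_Ioo).comp measurable_fst
    · exact (Measurable.indicator (by fun_prop) measurableSet_Ioo).comp measurable_snd
  have m2 : Measurable f2 := by
    apply Measurable.mul
    · exact (Measurable.indicator (by fun_prop) measurableSet_Ioo).comp measurable_snd
    · have : (fun p : ℝ × ℝ => (Ioo (1 - p.2 - δ) (1 - p.2)).indicator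
          (fun u => ENNReal.ofReal ((1 - p.2 - u) ^ (-e))) p.1) =
          ({p : ℝ × ℝ | 1 - p.2 - δ < p.1} ∩ {p : ℝ × ℝ | p.1 < 1 - p.2}).indicator
            (fun p => ENNReal.ofReal ((1 - p.2 - p.1) ^ (-e))) := by
        funext p
        by_cases hp : p.1 ∈ Ioo (1 - p.2 - δ) (1 - p.2)
        · rw [Set.indicator_of_mem hp, Set.indicator_of_mem
            (show p ∈ {p : ℝ × ℝ | 1 - p.2 - δ < p.1} ∩ {p : ℝ × ℝ | p.1 < 1 - p.2} from
              ⟨hp.1, hp.2⟩)]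
        · rw [Set.indicator_of_notMem hp, Set.indicator_of_notMem
            (fun h => hp ⟨h.1, h.2⟩)]
      rw [this]
      exact Measurable.indicator (by fun_prop)
        ((measurableSet_lt (by fun_prop) (by fun_prop)).inter
          (measurableSet_lt (by fun_prop) (by fun_prop)))
  have m3 : Measurable f3 := by
    apply Measurable.mul
    · exact (Measurable.indicator (by fun_prop) measurableSet_Ioo).comp measurable_fst
    · have : (fun p : ℝ × ℝ => (Ioo (1 - p.1 - δ) (1 - p.1)).indicator
          (fun v => ENNReal.ofReal ((1 - p.1 - v) ^ (-e))) p.2) =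
          ({p : ℝ × ℝ | 1 - p.1 - δ < p.2} ∩ {p : ℝ × ℝ | p.2 < 1 - p.1}).indicator
            (fun p => ENNReal.ofReal ((1 - p.1 - p.2) ^ (-e))) := by
        funext p
        by_cases hp : p.2 ∈ Ioo (1 - p.1 - δ) (1 - p.1)
        · rw [Set.indicator_of_mem hp, Set.indicator_of_mem
            (show p ∈ {p : ℝ × ℝ | 1 - p.1 - δ < p.2} ∩ {p : ℝ × ℝ | p.2 < 1 - p.1} from
              ⟨hp.1, hp.2⟩)]
        · rw [Set.indicator_of_notMem hp, Set.indicator_of_notMem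
            (fun h => hp ⟨h.1, h.2⟩)]
      rw [this]
      exact Measurable.indicator (by fun_prop)
        ((measurableSet_lt (by fun_prop) (by fun_prop)).inter
          (measurableSet_lt (by fun_prop) (by fun_prop)))
  -- finiteness of each piece
  have fin1 : ∫⁻ p, f1 p ∂(volume.prod volume) < ∞ := by
    rw [hf1_def]
    rw [MeasureTheory.lintegral_prod_mul
      ((Measurable.indicator (by fun_prop) measurableSet_Ioo).aemeasurable)
      ((Measurable.indicator (by fun_prop) measurableSet_Ioo).aemeasurable)]
    rw [lintegral_indicator measurableSet_Ioo, lintegral_indicator measurableSet_Ioo]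
    refine ENNReal.mul_lt_top ?_ ?_
    · have : ∀ u ∈ Ioo (0:ℝ) s, ENNReal.ofReal (Ce * (u ^ (a-1) * (s - u) ^ (c-1))) =
          ENNReal.ofReal Ce * ENNReal.ofReal (u ^ (a-1) * (s - u) ^ (c-1)) := fun u hu =>
        ENNReal.ofReal_mul hCe0
      rw [setLIntegral_congr_fun measurableSet_Ioo this]
      rw [lintegral_const_mul' _ _ ENNReal.ofReal_ne_top]
      exact ENNReal.mul_lt_top ENNReal.ofReal_lt_top
        (beta_fin (by linarith) (by linarith) hs0)
    · exact beta_fin (by linarith) (by linarith) (by linarith)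
  have fin2 : ∫⁻ p, f2 p ∂(volume.prod volume) < ∞ := by
    rw [MeasureTheory.lintegral_prod_symm' _ m2]
    have heq : ∀ y : ℝ, (∫⁻ x, f2 (x, y)) =
        ((Ioo (0:ℝ) t).indicator
          (fun v => ENNReal.ofReal ((Ca * Cc * Cb) * (t - v) ^ (d-1))) y) *
        (∫⁻ x, (Ioo (1 - y - δ) (1 - y)).indicator
          (fun u => ENNReal.ofReal ((1 - y - u) ^ (-e))) x) := by
      intro y
      rw [hf2_def]
      simp only
      rw [lintegral_const_mul' _ _ (by
        by_cases hy : y ∈ Ioo (0:ℝ) t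
        · rw [Set.indicator_of_mem hy]; exact ENNReal.ofReal_ne_top
        · rw [Set.indicator_of_notMem hy]; exact ENNReal.zero_ne_top)]
    simp_rw [heq]
    exact fin_piece (C := Ca * Cc * Cb) (r := t) he hδ0 hδ1 (by linarith)
  have fin3 : ∫⁻ p, f3 p ∂(volume.prod volume) < ∞ := by
    rw [MeasureTheory.lintegral_prod _ m3.aemeasurable]
    have heq : ∀ y : ℝ, (∫⁻ x, f3 (y, x)) =
        ((Ioo (0:ℝ) s).indicator
          (fun u => ENNReal.ofReal ((Ca * Cd * Cb) * (s - u) ^ (c-1))) y) *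
        (∫⁻ x, (Ioo (1 - y - δ) (1 - y)).indicator
          (fun v => ENNReal.ofReal ((1 - y - v) ^ (-e))) x) := by
      intro y
      rw [hf3_def]
      simp only
      rw [lintegral_const_mul' _ _ (by
        by_cases hy : y ∈ Ioo (0:ℝ) s
        · rw [Set.indicator_of_mem hy]; exact ENNReal.ofReal_ne_top
        · rw [Set.indicator_of_notMem hy]; exact ENNReal.zero_ne_top)]
    simp_rw [heq]
    exact fin_piece (C := Ca * Cd * Cb) (r := s) he hδ0 hδ1 (by linarith)
  -- combine
  calc Lg a b c d e s t ≤ ∫⁻ p, (f1 p + f2 p + f3 p) ∂(volume.prod volume) :=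
        lintegral_mono hpt
    _ = (∫⁻ p, f1 p ∂(volume.prod volume)) + (∫⁻ p, f2 p ∂(volume.prod volume)) +
        (∫⁻ p, f3 p ∂(volume.prod volume)) := by
        rw [lintegral_add_right _ m3, lintegral_add_right _ m2]
    _ < ∞ := by
        exact ENNReal.add_lt_top.2 ⟨ENNReal.add_lt_top.2 ⟨fin1, fin2⟩, fin3⟩


lemma I5_eq (a b c d e s t : ℝ)
    (hs0 : 0 < s) (hs1 : s < 1) (ht0 : 1 - s < t) (ht1 : t < 1)
    (hA : Ag a b c d e s t ≠ ∞) : I5 a b c d e s t = (Ag a b c d e s t).toReal := by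
  set N : ℝ → ℝ≥0∞ := fun v => ∫⁻ u in Ioo 0 s, ENNReal.ofReal (Kf a b c d e s t (u, v))
    with hN_def
  have hNmeas : Measurable N := by
    have h1 : N = fun v => ∫⁻ u,
        (Ioo (0:ℝ) s ×ˢ (univ : Set ℝ)).indicator
          (fun p => ENNReal.ofReal (Kf a b c d e s t p)) (u, v) := by
      funext v
      simp only [hN_def]
      rw [← lintegral_indicator measurableSet_Ioo]
      congr 1
      funext u
      by_cases hu : u ∈ Ioo (0:ℝ) s
      · rw [Set.indicator_of_mem hu, Set.indicator_of_mem (mem_prod.2 ⟨hu, mem_univ v⟩)]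
      · rw [Set.indicator_of_notMem hu,
          Set.indicator_of_notMem (fun h => hu (mem_prod.1 h).1)]
    rw [h1]
    exact Measurable.lintegral_prod_left'
      ((Measurable.ennreal_ofReal (by unfold Kf; fun_prop)).indicator
        (measurableSet_Ioo.prod MeasurableSet.univ))
  have hfin : ∀ᵐ v ∂(volume.restrict (Ioo (0:ℝ) (1-s))), N v < ∞ :=
    ae_lt_top hNmeas hA
  have key : ∀ v ∈ Ioo (0:ℝ) (1-s),
      (∫ u in (0:ℝ)..s, u ^ (a - 1) * (s - u) ^ (c - 1) * (1 - u - v) ^ (-e)) *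
        v ^ (b - 1) * (t - v) ^ (d - 1) = (N v).toReal := by
    intro v hv
    have hv0 : (0:ℝ) < v := hv.1
    have hv1 : v < 1 - s := hv.2
    have hw0 : (0:ℝ) ≤ v ^ (b-1) * (t - v) ^ (d-1) :=
      mul_nonneg (Real.rpow_nonneg hv0.le _) (Real.rpow_nonneg (by linarith) _)
    have hgnn : ∀ u ∈ Ioo (0:ℝ) s,
        (0:ℝ) ≤ u ^ (a - 1) * (s - u) ^ (c - 1) * (1 - u - v) ^ (-e) := fun u hu =>
      mul_nonneg (mul_nonneg (Real.rpow_nonneg hu.1.le _)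
        (Real.rpow_nonneg (by linarith [hu.2]) _)) (Real.rpow_nonneg (by
          have := hu.2; linarith) _)
    have hinner : (∫ u in (0:ℝ)..s, u ^ (a - 1) * (s - u) ^ (c - 1) * (1 - u - v) ^ (-e)) =
        (∫⁻ u in Ioo (0:ℝ) s,
          ENNReal.ofReal (u ^ (a - 1) * (s - u) ^ (c - 1) * (1 - u - v) ^ (-e))).toReal := by
      rw [intervalIntegral.integral_of_le hs0.le, MeasureTheory.integral_Ioc_eq_integral_Ioo]
      rw [MeasureTheory.integral_eq_lintegral_of_nonneg_ae
        ((ae_restrict_iff' measurableSet_Ioo).2 (Filter.Eventually.of_forall hgnn))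
        (Measurable.aestronglyMeasurable (by fun_prop))]
    have hNv : N v = (∫⁻ u in Ioo (0:ℝ) s,
        ENNReal.ofReal (u ^ (a - 1) * (s - u) ^ (c - 1) * (1 - u - v) ^ (-e))) *
        ENNReal.ofReal (v ^ (b-1) * (t - v) ^ (d-1)) := by
      rw [hN_def]
      rw [← lintegral_mul_const' _ _ ENNReal.ofReal_ne_top]
      refine setLIntegral_congr_fun measurableSet_Ioo
        (fun u hu => ?_)
      rw [← ENNReal.ofReal_mul (hgnn u hu)]
      rfl
    rw [hinner, hNv, ENNReal.toReal_mul, ENNReal.toReal_ofReal hw0]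
    ring
  rw [I5, intervalIntegral.integral_of_le (by linarith), MeasureTheory.integral_Ioc_eq_integral_Ioo]
  rw [MeasureTheory.setIntegral_congr_fun measurableSet_Ioo key]
  rw [MeasureTheory.integral_eq_lintegral_of_nonneg_ae
    (Filter.Eventually.of_forall fun v => ENNReal.toReal_nonneg)
    (hNmeas.ennreal_toReal.aestronglyMeasurable)]
  congr 1
  refine lintegral_congr_ae (hfin.mono fun v hv => ?_)
  exact ENNReal.ofReal_toReal hv.ne


lemma I6_eq (a b c d e s t : ℝ)
    (hs0 : 0 < s) (hs1 : s < 1) (ht0 : 1 - s < t) (ht1 : t < 1)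
    (hB : Bg a b c d e s t ≠ ∞) : I6 a b c d e s t = (Bg a b c d e s t).toReal := by
  set N : ℝ → ℝ≥0∞ := fun v => ∫⁻ u in Ioo 0 (1-v), ENNReal.ofReal (Kf a b c d e s t (u, v))
    with hN_def
  have hNmeas : Measurable N := by
    have h1 : N = fun v => ∫⁻ u,
        ({p : ℝ × ℝ | 0 < p.1 ∧ p.1 < 1 - p.2}).indicator
          (fun p => ENNReal.ofReal (Kf a b c d e s t p)) (u, v) := by
      funext v
      simp only [hN_def]
      rw [← lintegral_indicator measurableSet_Ioo]
      refine lintegral_congr fun u => ?_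
      by_cases hu : u ∈ Ioo (0:ℝ) (1-v)
      · rw [Set.indicator_of_mem hu, Set.indicator_of_mem
          (show (u, v) ∈ {p : ℝ × ℝ | 0 < p.1 ∧ p.1 < 1 - p.2} from ⟨hu.1, hu.2⟩)]
      · rw [Set.indicator_of_notMem hu, Set.indicator_of_notMem
          (fun h => hu ⟨h.1, h.2⟩)]
    rw [h1]
    exact Measurable.lintegral_prod_left'
      ((Measurable.ennreal_ofReal (by unfold Kf; fun_prop)).indicator
        ((measurableSet_lt measurable_const measurable_fst).inter
          (measurableSet_lt measurable_fst (by fun_prop))))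
  have hfin : ∀ᵐ v ∂(volume.restrict (Ioo (1-s) t)), N v < ∞ :=
    ae_lt_top hNmeas hB
  have key : ∀ v ∈ Ioo (1-s) t,
      (∫ u in (0:ℝ)..(1 - v), u ^ (a - 1) * (s - u) ^ (c - 1) * (1 - u - v) ^ (-e)) *
        v ^ (b - 1) * (t - v) ^ (d - 1) = (N v).toReal := by
    intro v hv
    have hv0 : (0:ℝ) < v := by have := hv.1; linarith
    have hv1 : 1 - s < v := hv.1
    have hvt : v < t := hv.2
    have hv2 : (0:ℝ) < 1 - v := by linarith
    have hw0 : (0:ℝ) ≤ v ^ (b-1) * (t - v) ^ (d-1) :=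
      mul_nonneg (Real.rpow_nonneg hv0.le _) (Real.rpow_nonneg (by linarith) _)
    have hgnn : ∀ u ∈ Ioo (0:ℝ) (1-v),
        (0:ℝ) ≤ u ^ (a - 1) * (s - u) ^ (c - 1) * (1 - u - v) ^ (-e) := fun u hu =>
      mul_nonneg (mul_nonneg (Real.rpow_nonneg hu.1.le _)
        (Real.rpow_nonneg (by have := hu.2; linarith) _))
        (Real.rpow_nonneg (by have := hu.2; linarith) _)
    have hinner : (∫ u in (0:ℝ)..(1 - v), u ^ (a - 1) * (s - u) ^ (c - 1) * (1 - u - v) ^ (-e)) =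
        (∫⁻ u in Ioo (0:ℝ) (1-v),
          ENNReal.ofReal (u ^ (a - 1) * (s - u) ^ (c - 1) * (1 - u - v) ^ (-e))).toReal := by
      rw [intervalIntegral.integral_of_le hv2.le, MeasureTheory.integral_Ioc_eq_integral_Ioo]
      rw [MeasureTheory.integral_eq_lintegral_of_nonneg_ae
        ((ae_restrict_iff' measurableSet_Ioo).2 (Filter.Eventually.of_forall hgnn))
        (Measurable.aestronglyMeasurable (by fun_prop))]
    have hNv : N v = (∫⁻ u in Ioo (0:ℝ) (1-v),
        ENNReal.ofReal (u ^ (a - 1) * (s - u) ^ (c - 1) * (1 - u - v) ^ (-e))) *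
        ENNReal.ofReal (v ^ (b-1) * (t - v) ^ (d-1)) := by
      simp only [hN_def]
      rw [← lintegral_mul_const' _ _ ENNReal.ofReal_ne_top]
      refine setLIntegral_congr_fun measurableSet_Ioo
        (fun u hu => ?_)
      rw [← ENNReal.ofReal_mul (hgnn u hu)]
      rfl
    rw [hinner, hNv, ENNReal.toReal_mul, ENNReal.toReal_ofReal hw0]
    ring
  rw [I6, intervalIntegral.integral_of_le (by linarith), MeasureTheory.integral_Ioc_eq_integral_Ioo]
  rw [MeasureTheory.setIntegral_congr_fun measurableSet_Ioo key]
  rw [MeasureTheory.integral_eq_lintegral_of_nonneg_ae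
    (Filter.Eventually.of_forall fun v => ENNReal.toReal_nonneg)
    (hNmeas.ennreal_toReal.aestronglyMeasurable)]
  congr 1
  refine lintegral_congr_ae (hfin.mono fun v hv => ?_)
  exact ENNReal.ofReal_toReal hv.ne


/-- The sum `I₅ + I₆` is invariant under simultaneously interchanging
`a ↔ b`, `c ↔ d` and `s ↔ t`. -/
theorem stmt18 (a b c d e : ℝ) (ha : 0 < a) (hb : 0 < b) (hc : 0 < c) (hd : 0 < d)
    (he : e < 1)
    (s t : ℝ) (hs0 : 0 < s) (hs1 : s < 1) (ht0 : 1 - s < t) (ht1 : t < 1) :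
    I5 a b c d e s t + I6 a b c d e s t = I5 b a d c e t s + I6 b a d c e t s := by
  have ht0' : (0:ℝ) < t := by linarith
  have hs0' : 1 - t < s := by linarith
  have hfin : Lg a b c d e s t < ∞ := Lg_fin a b c d e s t ha hb hc hd he hs0 hs1 ht0 ht1
  have hfin' : Lg b a d c e t s < ∞ := Lg_fin b a d c e t s hb ha hd hc he ht0' ht1 hs0' hs1
  have hadd : Lg a b c d e s t = Ag a b c d e s t + Bg a b c d e s t :=
    Lg_eq_add a b c d e s t hs0 hs1 ht0 ht1
  have hadd' : Lg b a d c e t s = Ag b a d c e t s + Bg b a d c e t s :=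
    Lg_eq_add b a d c e t s ht0' ht1 hs0' hs1
  have hA : Ag a b c d e s t ≠ ∞ :=
    ne_top_of_le_ne_top hfin.ne (hadd ▸ le_self_add)
  have hB : Bg a b c d e s t ≠ ∞ :=
    ne_top_of_le_ne_top hfin.ne (hadd ▸ le_add_self)
  have hA' : Ag b a d c e t s ≠ ∞ :=
    ne_top_of_le_ne_top hfin'.ne (hadd' ▸ le_self_add)
  have hB' : Bg b a d c e t s ≠ ∞ :=
    ne_top_of_le_ne_top hfin'.ne (hadd' ▸ le_add_self)
  rw [I5_eq a b c d e s t hs0 hs1 ht0 ht1 hA, I6_eq a b c d e s t hs0 hs1 ht0 ht1 hB,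
    I5_eq b a d c e t s ht0' ht1 hs0' hs1 hA', I6_eq b a d c e t s ht0' ht1 hs0' hs1 hB',
    ← ENNReal.toReal_add hA hB, ← ENNReal.toReal_add hA' hB', ← hadd, ← hadd', Lg_symm]
end
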